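/- For every r ≥ 1, Σ_{H ∈ H_r} |H ∩ rB^n ∩ ℤ^n| ≤ |H_r| + |rB^n ∩ ℤ^n|^{n−1}, where |rB^n ∩ ℤ^n| denotes the number of lattice points in the ball of radius r. -/

import Mathlib

open scoped BigOperators
open Pointwise Metric

noncomputable section

/-- `ℝ^n` with the Euclidean structure. -/
abbrev Euc (n : ℕ) := EuclideanSpace ℝ (Fin n)

/-- A point of `ℝ^n` is a lattice point if all its coordinates are integers. -/
def IsLatticePoint {n : ℕ} (x : Euc n) : Prop := ∀ i, ∃ m : ℤ, x i = (m : ℝ)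

/-- A compact convex body, symmetric about the origin, with nonempty interior. -/
def IsSymmConvexBody {n : ℕ} (C : Set (Euc n)) : Prop :=
  IsCompact C ∧ Convex ℝ C ∧ (∀ x ∈ C, -x ∈ C) ∧ (interior C).Nonempty

/-- `IsSuccMin C i l` means `l` is the `i`-th successive minimum of `C` w.r.t. `ℤ^n`:
the least `t > 0` such that `t • C` contains `i` linearly independent lattice points. -/
def IsSuccMin {n : ℕ} (C : Set (Euc n)) (i : ℕ) (l : ℝ) : Prop :=
  IsLeast {t : ℝ | 0 < t ∧ ∃ v : Fin i → Euc n, LinearIndependent ℝ v ∧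
    ∀ j, IsLatticePoint (v j) ∧ v j ∈ t • C} l

/-- A finite set of points in `ℝ^n` is in general position if no `n` of its elements
are linearly dependent. -/
def InGenPos {n : ℕ} (S : Finset (Euc n)) : Prop :=
  ∀ T ⊆ S, T.card = n →
    LinearIndependent ℝ (fun x : (T : Set (Euc n)) => (x : Euc n))

/-- `h(C)`: the maximum cardinality of a subset of `C ∩ ℤ^n` in general position. -/
def maxGenPos {n : ℕ} (C : Set (Euc n)) : ℕ :=
  sSup {k : ℕ | ∃ S : Finset (Euc n), S.card = k ∧ ↑S ⊆ C ∧
    (∀ x ∈ S, IsLatticePoint x) ∧ InGenPos S}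

/-- `g(C)`: the minimum number of proper linear subspaces covering `C ∩ ℤ^n`. -/
def coverNum {n : ℕ} (C : Set (Euc n)) : ℕ :=
  sInf {k : ℕ | ∃ F : Finset (Submodule ℝ (Euc n)), F.card = k ∧
    (∀ H ∈ F, H ≠ ⊤) ∧ ∀ x ∈ C, IsLatticePoint x → ∃ H ∈ F, x ∈ H}

/-- `H_r`: the set of `(n-1)`-dimensional linear subspaces of `ℝ^n` containing
`n-1` linearly independent lattice points of norm at most `r`. -/
def hyperSet (n : ℕ) (r : ℝ) : Set (Submodule ℝ (Euc n)) :=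
  {H | Module.finrank ℝ H = n - 1 ∧ ∃ v : Fin (n - 1) → Euc n,
    LinearIndependent ℝ v ∧ ∀ j, IsLatticePoint (v j) ∧ ‖v j‖ ≤ r ∧ v j ∈ H}

/-- The number of lattice points of the ball of radius `r` lying on the subspace `H`. -/
def hypLatCount (n : ℕ) (H : Submodule ℝ (Euc n)) (r : ℝ) : ℕ :=
  {x : Euc n | x ∈ H ∧ ‖x‖ ≤ r ∧ IsLatticePoint x}.ncard


lemma lattice_zero {n : ℕ} : IsLatticePoint (0 : Euc n) := fun i => ⟨0, by simp⟩

lemma coord_abs_le_norm {n : ℕ} (x : Euc n) (i : Fin n) : |x i| ≤ ‖x‖ := by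
  rw [EuclideanSpace.norm_eq, show |x i| = Real.sqrt (‖x i‖^2) by
    rw [Real.sqrt_sq_eq_abs]; simp [Real.norm_eq_abs]]
  exact Real.sqrt_le_sqrt (Finset.single_le_sum (f := fun j => ‖x j‖^2)
    (fun j _ => sq_nonneg _) (Finset.mem_univ i))

lemma ball_lattice_finite (n : ℕ) (r : ℝ) :
    {x : Euc n | IsLatticePoint x ∧ ‖x‖ ≤ r}.Finite := by
  set M : ℤ := ⌈r⌉ with hM
  have hK : (Set.pi Set.univ (fun _ : Fin n => Set.Icc (-M) M)).Finite :=
    Set.Finite.pi fun i => Set.finite_Icc _ _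
  apply Set.Finite.subset (hK.image (fun m : Fin n → ℤ => (WithLp.toLp 2 (fun i => (m i : ℝ)) : Euc n)))
  rintro x ⟨hxl, hxr⟩
  choose m hm using hxl
  refine ⟨m, fun i _ => ?_, ?_⟩
  · have h1 : |(m i : ℝ)| ≤ (M : ℝ) := by
      rw [← hm i]; exact (coord_abs_le_norm x i).trans (hxr.trans (Int.le_ceil r))
    have := abs_le.mp (by exact_mod_cast h1 : |m i| ≤ M)
    exact Set.mem_Icc.mpr this
  · ext i; simp [hm i]

lemma exchange {n : ℕ} (hn : 2 ≤ n) {r : ℝ} {H : Submodule ℝ (Euc n)}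
    (hH : H ∈ hyperSet n r) {x : Euc n} (hxH : x ∈ H) (hx0 : x ≠ 0)
    (hxl : IsLatticePoint x) (hxr : ‖x‖ ≤ r) :
    ∃ w : Fin (n-1) → Euc n, w ⟨0, by omega⟩ = x ∧
      (∀ j, IsLatticePoint (w j) ∧ ‖w j‖ ≤ r) ∧
      Submodule.span ℝ (Set.range w) = H := by
  obtain ⟨hfr, v, hvli, hv⟩ := hH
  have hvH : ∀ j, v j ∈ H := fun j => (hv j).2.2
  have hle : Submodule.span ℝ (Set.range v) ≤ H :=
    Submodule.span_le.mpr (Set.range_subset_iff.mpr hvH)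
  have hfr2 : Module.finrank ℝ (Submodule.span ℝ (Set.range v)) = n - 1 := by
    rw [finrank_span_eq_card hvli]; simp
  have hspan : Submodule.span ℝ (Set.range v) = H :=
    Submodule.eq_of_le_of_finrank_le hle (by rw [hfr, hfr2])
  have hx_li : LinearIndependent ℝ ((↑) : ({x} : Set (Euc n)) → Euc n) :=
    (linearIndepOn_singleton_iff (R := ℝ) (v := (id : Euc n → Euc n))).mpr hx0
  obtain ⟨b, hbt, hxb, htb', hbli'⟩ := exists_linearIndepOn_extension (v := id) hx_li
    (Set.singleton_subset_iff.mpr (Set.mem_insert x _))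
  have htb : insert x (Set.range v) ⊆ Submodule.span ℝ b := by simpa using htb'
  have hbli : LinearIndependent ℝ ((↑) : b → Euc n) := hbli'
  have hbfin : b.Finite :=
    Set.Finite.subset ((Set.finite_range v).insert x) hbt
  haveI : Fintype b := hbfin.fintype
  have hbH : Submodule.span ℝ b = H := by
    apply le_antisymm
    · rw [Submodule.span_le]
      intro y hy
      rcases Set.mem_insert_iff.mp (hbt hy) with rfl | hy'
      · exact hxH
      · obtain ⟨j, rfl⟩ := hy'; exact hvH j
    · rw [← hspan]
      exact Submodule.span_le.mpr
        ((Set.subset_insert x _).trans htb)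
  have hcard : b.toFinset.card = n - 1 := by
    have := finrank_span_set_eq_card hbli
    rw [hbH, hfr] at this; omega
  have hxbf : x ∈ b.toFinset := Set.mem_toFinset.mpr (hxb rfl)
  set bf := b.toFinset with hbf
  let e : Fin (n-1) ≃ bf := (finCongr hcard.symm).trans bf.equivFin.symm
  set z : Fin (n-1) := ⟨0, by omega⟩ with hz
  let i0 : Fin (n-1) := e.symm ⟨x, hxbf⟩
  refine ⟨fun j => ↑(e (Equiv.swap z i0 j)), ?_, ?_, ?_⟩
  · simp [Equiv.swap_apply_left, i0]
  · intro j
    dsimp only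
    have hmem : (↑(e (Equiv.swap z i0 j)) : Euc n) ∈ b :=
      Set.mem_toFinset.mp (e (Equiv.swap z i0 j)).2
    rcases Set.mem_insert_iff.mp (hbt hmem) with h | h
    · rw [h]; exact ⟨hxl, hxr⟩
    · obtain ⟨j', hj'⟩ := h; rw [← hj']; exact ⟨(hv j').1, (hv j').2.1⟩
  · have hr : Set.range (fun j => (↑(e (Equiv.swap z i0 j)) : Euc n)) = b := by
      have h1 : Set.range (fun j => (↑(e (Equiv.swap z i0 j)) : Euc n))
          = Set.range (fun y : bf => (y : Euc n)) := by
        apply Function.Surjective.range_comp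
        exact e.surjective.comp (Equiv.swap z i0).surjective
      rw [h1, Subtype.range_coe_subtype]
      simp [bf]
    rw [hr, hbH]

/-- For every `r ≥ 1`,
`Σ_{H ∈ H_r} |H ∩ rB^n ∩ ℤ^n| ≤ |H_r| + |rB^n ∩ ℤ^n|^{n-1}`. -/
theorem sum_hyperplane_counts_le (n : ℕ) (hn : 2 ≤ n) (r : ℝ) (hr : 1 ≤ r) :
    ∀ S : Finset (Submodule ℝ (Euc n)), ↑S = hyperSet n r →
      ∑ H ∈ S, hypLatCount n H r ≤
        S.card + ({x : Euc n | IsLatticePoint x ∧ ‖x‖ ≤ r}.ncard) ^ (n - 1) := by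
  
  classical
  intro S hS
  have hr0 : (0:ℝ) ≤ r := le_trans zero_le_one hr
  have hLfin := ball_lattice_finite n r
  set Lf := hLfin.toFinset with hLf
  have hA : ∀ H : Submodule ℝ (Euc n),
      {x : Euc n | x ∈ H ∧ ‖x‖ ≤ r ∧ IsLatticePoint x}.Finite :=
    fun H => hLfin.subset (fun x hx => ⟨hx.2.2, hx.2.1⟩)
  set P : Submodule ℝ (Euc n) → Finset (Euc n) :=
    fun H => ((hA H).toFinset).erase 0 with hP
  have hmemS : ∀ H ∈ S, H ∈ hyperSet n r := by
    intro H hHS; rw [← hS]; exact hHS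
  have hcount : ∀ H ∈ S, hypLatCount n H r = (P H).card + 1 := by
    intro H hHS
    have h0 : (0:Euc n) ∈ (hA H).toFinset := by
      rw [Set.Finite.mem_toFinset]
      exact ⟨H.zero_mem, by simpa using hr0, lattice_zero⟩
    have h1 : hypLatCount n H r = (hA H).toFinset.card :=
      Set.ncard_eq_toFinset_card _ (hA H)
    rw [h1, hP, ← Finset.card_erase_add_one h0]
  have hcard_eq : Lf.card = {x : Euc n | IsLatticePoint x ∧ ‖x‖ ≤ r}.ncard :=
    (Set.ncard_eq_toFinset_card _ hLfin).symm
  set z : Fin (n-1) := ⟨0, by omega⟩ with hz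
  set g : (Σ _ : Submodule ℝ (Euc n), Euc n) → (Fin (n-1) → Euc n) := fun p =>
    if h : p.1 ∈ hyperSet n r ∧ p.2 ∈ p.1 ∧ p.2 ≠ 0 ∧ IsLatticePoint p.2 ∧ ‖p.2‖ ≤ r then
      (exchange hn h.1 h.2.1 h.2.2.1 h.2.2.2.1 h.2.2.2.2).choose
    else fun _ => 0 with hg
  have hcond : ∀ p ∈ S.sigma P,
      p.1 ∈ hyperSet n r ∧ p.2 ∈ p.1 ∧ p.2 ≠ 0 ∧ IsLatticePoint p.2 ∧ ‖p.2‖ ≤ r := by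
    rintro ⟨H, x⟩ hp
    rw [Finset.mem_sigma] at hp
    obtain ⟨hHS, hx⟩ := hp
    simp only [hP, Finset.mem_erase, Set.Finite.mem_toFinset] at hx
    exact ⟨hmemS H hHS, hx.2.1, hx.1, hx.2.2.2, hx.2.2.1⟩
  have hspec : ∀ p ∈ S.sigma P,
      g p z = p.2 ∧ (∀ j, IsLatticePoint (g p j) ∧ ‖g p j‖ ≤ r) ∧
      Submodule.span ℝ (Set.range (g p)) = p.1 := by
    intro p hp
    have h := hcond p hp
    rw [hg]; dsimp only; rw [dif_pos h]
    exact (exchange hn h.1 h.2.1 h.2.2.1 h.2.2.2.1 h.2.2.2.2).choose_spec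
  have hsum : ∑ H ∈ S, (P H).card ≤ Lf.card ^ (n - 1) := by
    rw [← Finset.card_sigma]
    have htarget : (Fintype.piFinset fun _ : Fin (n-1) => Lf).card = Lf.card ^ (n-1) := by
      rw [Fintype.card_piFinset]; simp
    rw [← htarget]
    apply Finset.card_le_card_of_injOn g
    · intro p hp
      rw [Finset.mem_coe, Fintype.mem_piFinset]
      intro j
      rw [Set.Finite.mem_toFinset]
      exact ⟨((hspec p hp).2.1 j).1, ((hspec p hp).2.1 j).2⟩
    · rintro ⟨H1, x1⟩ hp ⟨H2, x2⟩ hq heq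
      obtain ⟨he1, _, hs1⟩ := hspec _ hp
      obtain ⟨he2, _, hs2⟩ := hspec _ hq
      have hx : x1 = x2 := by
        rw [← show g ⟨H1, x1⟩ z = x1 from he1, heq]; exact he2
      have hH : H1 = H2 := by
        rw [← show Submodule.span ℝ (Set.range (g ⟨H1, x1⟩)) = H1 from hs1, heq]; exact hs2
      subst hx; subst hH; rfl
  calc ∑ H ∈ S, hypLatCount n H r = ∑ H ∈ S, ((P H).card + 1) :=
        Finset.sum_congr rfl hcount
    _ = (∑ H ∈ S, (P H).card) + S.card := by
        rw [Finset.sum_add_distrib, Finset.sum_const, smul_eq_mul, mul_one]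
    _ ≤ Lf.card ^ (n-1) + S.card := by gcongr
    _ = S.card + ({x : Euc n | IsLatticePoint x ∧ ‖x‖ ≤ r}.ncard) ^ (n - 1) := by
        rw [add_comm, hcard_eq]
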